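/- For any set system D = ([n], F) and any element i ∈ [n], the composite operations + * + and * + * applied to element i give the same set system: ((D + i) * i) + i = ((D * i) + i) * i; this common involution is denoted \bar{*} i, and its feasible sets are F △ {I \ {i} : I ∈ F, i ∈ I}. -/

import Mathlib

open scoped symmDiff

def twist {n : ℕ} (F : Finset (Finset (Fin n))) (i : Fin n) : Finset (Finset (Fin n)) :=
  F.image (fun X => X ∆ ({i} : Finset (Fin n)))

def loopComp {n : ℕ} (F : Finset (Finset (Fin n))) (i : Fin n) : Finset (Finset (Fin n)) :=
  F ∆ ((F.filter (fun I => i ∉ I)).image (fun I => insert i I))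

/-- The operation `\bar{∗} i`, with feasible sets `F ∆ {I \ {i} : I ∈ F, i ∈ I}`. -/
def barStar {n : ℕ} (F : Finset (Finset (Fin n))) (i : Fin n) : Finset (Finset (Fin n)) :=
  F ∆ ((F.filter (fun I => i ∈ I)).image (fun I => I.erase i))

lemma mem_twist {n : ℕ} (F : Finset (Finset (Fin n))) (i : Fin n) (X : Finset (Fin n)) :
    X ∈ twist F i ↔ X ∆ ({i} : Finset (Fin n)) ∈ F := by
  constructor
  · rintro h
    simp only [twist, Finset.mem_image] at h
    obtain ⟨Y, hY, rfl⟩ := h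
    rwa [symmDiff_symmDiff_cancel_right]
  · intro h
    simp only [twist, Finset.mem_image]
    exact ⟨X ∆ {i}, h, symmDiff_symmDiff_cancel_right _ _⟩

lemma symmDiff_singleton_mem {n : ℕ} {i : Fin n} {X : Finset (Fin n)} (h : i ∈ X) :
    X ∆ ({i} : Finset (Fin n)) = X.erase i := by
  ext j
  by_cases hj : j = i <;> simp [Finset.mem_symmDiff, hj, h]

lemma symmDiff_singleton_not_mem {n : ℕ} {i : Fin n} {X : Finset (Fin n)} (h : i ∉ X) :
    X ∆ ({i} : Finset (Fin n)) = insert i X := by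
  ext j
  by_cases hj : j = i <;> simp [Finset.mem_symmDiff, hj, h]

lemma mem_loopComp {n : ℕ} (F : Finset (Finset (Fin n))) (i : Fin n) (X : Finset (Fin n)) :
    X ∈ loopComp F i ↔ Xor' (X ∈ F) (i ∈ X ∧ X.erase i ∈ F) := by
  simp only [loopComp, Finset.mem_symmDiff, Finset.mem_image, Finset.mem_filter, Xor']
  constructor
  · rintro (⟨h1, h2⟩ | ⟨⟨I, ⟨hI, hiI⟩, rfl⟩, h2⟩)
    · refine Or.inl ⟨h1, fun ⟨hi, he⟩ => h2 ⟨X.erase i, ⟨he, Finset.notMem_erase i X⟩, Finset.insert_erase hi⟩⟩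
    · exact Or.inr ⟨⟨Finset.mem_insert_self i I, by rwa [Finset.erase_insert hiI]⟩, h2⟩
  · rintro (⟨h1, h2⟩ | ⟨⟨hi, he⟩, h2⟩)
    · refine Or.inl ⟨h1, fun ⟨I, ⟨hI, hiI⟩, hins⟩ => h2 ⟨?_, ?_⟩⟩
      · rw [← hins]; exact Finset.mem_insert_self i I
      · rw [← hins, Finset.erase_insert hiI]; exact hI
    · exact Or.inr ⟨⟨X.erase i, ⟨he, Finset.notMem_erase i X⟩, Finset.insert_erase hi⟩, h2⟩

lemma mem_barStar {n : ℕ} (F : Finset (Finset (Fin n))) (i : Fin n) (X : Finset (Fin n)) :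
    X ∈ barStar F i ↔ Xor' (X ∈ F) (i ∉ X ∧ insert i X ∈ F) := by
  simp only [barStar, Finset.mem_symmDiff, Finset.mem_image, Finset.mem_filter, Xor']
  constructor
  · rintro (⟨h1, h2⟩ | ⟨⟨I, ⟨hI, hiI⟩, rfl⟩, h2⟩)
    · refine Or.inl ⟨h1, fun ⟨hi, he⟩ => h2 ⟨insert i X, ⟨he, Finset.mem_insert_self i X⟩, Finset.erase_insert hi⟩⟩
    · exact Or.inr ⟨⟨Finset.notMem_erase i I, by rwa [Finset.insert_erase hiI]⟩, h2⟩
  · rintro (⟨h1, h2⟩ | ⟨⟨hi, he⟩, h2⟩)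
    · refine Or.inl ⟨h1, fun ⟨I, ⟨hI, hiI⟩, hers⟩ => h2 ⟨?_, ?_⟩⟩
      · rw [← hers]; exact Finset.notMem_erase i I
      · rw [← hers, Finset.insert_erase hiI]; exact hI
    · exact Or.inr ⟨⟨insert i X, ⟨he, Finset.mem_insert_self i X⟩, Finset.erase_insert hi⟩, h2⟩

/-- `+∗+ = ∗+∗` on a single element, and this common operation equals `\bar{∗} i`. -/
theorem barStar_eq {n : ℕ} (F : Finset (Finset (Fin n))) (i : Fin n) :
    loopComp (twist (loopComp F i) i) i = twist (loopComp (twist F i) i) i ∧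
      loopComp (twist (loopComp F i) i) i = barStar F i := by
  have key : ∀ X, (X ∈ loopComp (twist (loopComp F i) i) i ↔ X ∈ barStar F i)
      ∧ (X ∈ twist (loopComp (twist F i) i) i ↔ X ∈ barStar F i) := by
    intro X
    by_cases hi : i ∈ X
    · have hins : insert i (X.erase i) = X := Finset.insert_erase hi
      have hni : i ∉ X.erase i := Finset.notMem_erase i X
      simp only [mem_loopComp, mem_twist, mem_barStar,
        symmDiff_singleton_mem hi, symmDiff_singleton_not_mem hni, hins,
        Xor', xor_def, hi, hni]
      constructor <;> tauto
    · have hers : (insert i X).erase i = X := Finset.erase_insert hi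
      have hii : i ∈ insert i X := Finset.mem_insert_self i X
      simp only [mem_loopComp, mem_twist, mem_barStar,
        symmDiff_singleton_not_mem hi, symmDiff_singleton_mem hii, hers,
        Xor', xor_def, hi, hii]
      constructor <;> tauto
  refine ⟨?_, ?_⟩
  · ext X; rw [(key X).1, ← (key X).2]
  · ext X; exact (key X).1
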